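/- Let P be a shift-invariant probability measure on A^ℤ satisfying the exponential approximation of hitting times with constants C, c, ρ₁, ρ₂ > 0 as in the Key Lemma. Let W⁺ₙ(ω, ω′) := T_{ω₁ⁿ}(ω′) be the waiting time of the first n symbols of ω in an independent copy ω′. Then for every α₁ with α₁ρ₁ > 1, eventually (P×P)-almost surely, log(W⁺ₙ(ω,ω′) · P([ω₁ⁿ])) ≤ log log n^{α₁}. -/

import Mathlib

open MeasureTheory Filter Finset
open scoped ENNReal

def shift {A : Type*} (ω : ℤ → A) : ℤ → A := fun k => ω (k + 1)

def cylinder {A : Type*} {n : ℕ} (x : Fin n → A) : Set (ℤ → A) :=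
  {ω | ∀ i : Fin n, ω i = x i}

def blockOf {A : Type*} (n : ℕ) (ω : ℤ → A) : Fin n → A := fun i => ω i

noncomputable def hitTime {A : Type*} {n : ℕ} (x : Fin n → A) (ω : ℤ → A) : ℕ :=
  sInf {k : ℕ | 1 ≤ k ∧ shift^[k] ω ∈ cylinder x}

/-- The waiting time `W⁺ₙ(ω,ω') = T_{ω₁ⁿ}(ω')` of the first `n` symbols of `ω` in
the independent trajectory `ω'`. -/
noncomputable def waitTime {A : Type*} (n : ℕ) (ω ω' : ℤ → A) : ℕ :=
  hitTime (blockOf n ω) ω'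

namespace WTLaux
lemma shift_iterate {A : Type*} (ω : ℤ → A) (k : ℕ) (i : ℤ) :
    (shift^[k] ω) i = ω (i + k) := by
  induction k generalizing ω i with
  | zero => simp
  | succ k ih =>
    rw [Function.iterate_succ_apply, ih]
    show ω (i + k + 1) = ω (i + (k + 1 : ℕ))
    congr 1; push_cast; ring
variable {A : Type*} [MeasurableSpace A]
def atomOf (x : A) : Set A := ⋂₀ {s : Set A | MeasurableSet s ∧ x ∈ s}
lemma mem_atomOf_self (x : A) : x ∈ atomOf x := fun _ hs => hs.2
lemma atomOf_subset {x : A} {s : Set A} (hs : MeasurableSet s) (hx : x ∈ s) :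
    atomOf x ⊆ s := Set.sInter_subset_of_mem ⟨hs, hx⟩
lemma measurableSet_atomOf [Finite A] (x : A) : MeasurableSet (atomOf x) :=
  (Set.toFinite _).measurableSet_sInter fun _ ht => ht.1
lemma mem_atomOf_symm {x y : A} (h : y ∈ atomOf x) : x ∈ atomOf y := by
  intro s hs; rcases hs with ⟨hsm, hys⟩; by_contra hxs
  exact (atomOf_subset hsm.compl hxs h) hys
lemma atomOf_eq_of_mem {x y : A} (h : y ∈ atomOf x) : atomOf y = atomOf x := by
  apply Set.Subset.antisymm
  · intro z hz s hs; exact hz s ⟨hs.1, h s hs⟩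
  · intro z hz s hs; exact hz s ⟨hs.1, atomOf_subset hs.1 hs.2 (mem_atomOf_symm h)⟩
lemma preimage_eq_self_of_atomMap {m : A → A} (hm : ∀ z, m z ∈ atomOf z)
    {s : Set A} (hs : MeasurableSet s) : m ⁻¹' s = s := by
  ext z; simp only [Set.mem_preimage]
  exact ⟨fun h => atomOf_subset hs h (mem_atomOf_symm (hm z)),
    fun h => atomOf_subset hs h (hm z)⟩
lemma pi_preimage_eq_self (m : ℤ → A → A) (hm : ∀ i z, m i z ∈ atomOf z)
    {H : Set (ℤ → A)} (hH : MeasurableSet H) :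
    (fun ω i => m i (ω i)) ⁻¹' H = H := by
  set g : (ℤ → A) → (ℤ → A) := fun ω i => m i (ω i) with hg
  let M : MeasurableSpace (ℤ → A) :=
    { MeasurableSet' := fun s => g ⁻¹' s = s
      measurableSet_empty := by simp
      measurableSet_compl := fun s hs => by
        change g ⁻¹' sᶜ = sᶜ
        rw [Set.preimage_compl]
        change g ⁻¹' s = s at hs
        rw [hs]
      measurableSet_iUnion := fun f hf => by
        change g ⁻¹' (⋃ i, f i) = _
        rw [Set.preimage_iUnion]
        exact Set.iUnion_congr hf }
  have hle : (MeasurableSpace.pi : MeasurableSpace (ℤ → A)) ≤ M := by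
    refine iSup_le fun i => ?_
    intro s hs
    obtain ⟨t, htm, rfl⟩ := hs
    change g ⁻¹' ((fun ω : ℤ → A => ω i) ⁻¹' t) = _
    have h2 : g ⁻¹' ((fun ω : ℤ → A => ω i) ⁻¹' t)
        = (fun ω : ℤ → A => ω i) ⁻¹' (m i ⁻¹' t) := rfl
    rw [h2, preimage_eq_self_of_atomMap (hm i) htm]
  exact hle H hH

-- new part
lemma hitTime_eq_of {A' : Type*} {n : ℕ} (a : Fin n → A') (ω : ℤ → A') (k : ℕ)
    (hk : 1 ≤ k ∧ shift^[k] ω ∈ cylinder a)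
    (hlt : ∀ j, 1 ≤ j → j < k → shift^[j] ω ∉ cylinder a) :
    hitTime a ω = k := by
  have hmem : k ∈ {k : ℕ | 1 ≤ k ∧ shift^[k] ω ∈ cylinder a} := hk
  refine le_antisymm (Nat.sInf_le hmem) ?_
  by_contra h
  push_neg at h
  have hsm := Nat.sInf_mem ⟨k, hmem⟩
  exact hlt _ hsm.1 h hsm.2

lemma exists_delay {n : ℕ} (hn : 0 < n) {x y : A}
    (hy : y ∈ atomOf x) (hyx : y ≠ x) (ω : ℤ → A) (k : ℕ) (hk : 1 ≤ k)
    (hhit : ∀ j : Fin n, ω ((j : ℤ) + (k : ℤ)) ∈ atomOf x) :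
    ∃ ω' : ℤ → A, hitTime (fun _ : Fin n => x) ω' = k ∧
      ∀ H : Set (ℤ → A), MeasurableSet H → (ω' ∈ H ↔ ω ∈ H) := by
  classical
  set m : ℤ → A → A := fun i z =>
    if 1 ≤ i ∧ i < (k : ℤ) then (if z ∈ atomOf x then y else z)
    else if (k : ℤ) ≤ i ∧ i < (k : ℤ) + (n : ℤ) then (if z ∈ atomOf x then x else z)
    else z with hm
  have hmatom : ∀ i z, m i z ∈ atomOf z := by
    intro i z
    by_cases hz : z ∈ atomOf x
    · have heq : atomOf z = atomOf x := atomOf_eq_of_mem hz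
      simp only [hm, hz, if_true]
      split_ifs
      · rw [heq]; exact hy
      · rw [heq]; exact mem_atomOf_self x
      · exact mem_atomOf_self z
    · simp only [hm, hz, if_false]
      split_ifs <;> exact mem_atomOf_self z
  set ω' : ℤ → A := fun i => m i (ω i) with hω'
  have hval1 : ∀ i : ℤ, 1 ≤ i → i < (k : ℤ) → ω' i ≠ x := by
    intro i h1 h2
    show m i (ω i) ≠ x
    rw [hm]
    simp only [h1, h2, and_self, if_true]
    by_cases hz : ω i ∈ atomOf x
    · simp only [hz, if_true]; exact hyx
    · simp only [hz, if_false]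
      intro hcon
      exact hz (hcon ▸ mem_atomOf_self x)
  have hval2 : ∀ j : Fin n, ω' ((j : ℤ) + (k : ℤ)) = x := by
    intro j
    show m ((j : ℤ) + (k : ℤ)) (ω ((j : ℤ) + (k : ℤ))) = x
    have hj0 : (0 : ℤ) ≤ (j : ℤ) := by positivity
    have hc1 : ¬ ((1 : ℤ) ≤ (j : ℤ) + (k : ℤ) ∧ (j : ℤ) + (k : ℤ) < (k : ℤ)) := by
      intro hcon; omega
    have hc2 : (k : ℤ) ≤ (j : ℤ) + (k : ℤ) ∧ (j : ℤ) + (k : ℤ) < (k : ℤ) + (n : ℤ) := by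
      constructor
      · omega
      · have : (j : ℤ) < (n : ℤ) := by exact_mod_cast j.2
        omega
    rw [hm]
    simp only [hc1, if_false, hc2, and_self, if_true, hhit j]
  refine ⟨ω', ?_, ?_⟩
  · apply hitTime_eq_of
    · refine ⟨hk, fun j => ?_⟩
      rw [shift_iterate]
      exact hval2 j
    · intro j hj1 hjk hcon
      have h0 := hcon ⟨0, hn⟩
      rw [shift_iterate] at h0
      have : ω' ((((⟨0, hn⟩ : Fin n) : ℤ)) + (j : ℤ)) ≠ x := by
        have hz : ((⟨0, hn⟩ : Fin n) : ℤ) = 0 := rfl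
        rw [hz, zero_add]
        exact hval1 j (by exact_mod_cast hj1) (by exact_mod_cast hjk)
      exact this h0
  · intro H hH
    have hpre := pi_preimage_eq_self m hmatom hH
    have hmem : ω' ∈ H ↔ ω ∈ (fun ω i => m i (ω i)) ⁻¹' H := Iff.rfl
    rw [hpre] at hmem
    exact hmem

lemma pathology {A : Type*} [Fintype A] [MeasurableSpace A]
    (P : Measure (ℤ → A)) [IsProbabilityMeasure P]
    (hinv : MeasurePreserving shift P P)
    (C c ρ₁ ρ₂ : ℝ) (hC : 0 < C) (hc : 0 < c) (hρ₁ : 0 < ρ₁)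
    (hKey : ∀ (n : ℕ) (a : Fin n → A), ∃ ρ ∈ Set.Icc ρ₁ ρ₂, ∀ t : ℝ, 0 < t →
      |(P {ω | (hitTime a ω : ℝ) * (P (cylinder a)).toReal > t}).toReal -
          Real.exp (-ρ * t)| ≤ C * Real.exp (-c * n) * Real.exp (-ρ * t))
    {x y : A} (hy : y ∈ atomOf x) (hyx : y ≠ x) : False := by
  classical
  -- choose n large
  set n : ℕ := ⌈Real.log (2 * C) / c⌉₊ + 1 with hn'
  have hn : 0 < n := Nat.succ_pos _
  have hsmall : C * Real.exp (-c * (n : ℝ)) < 1 / 2 := by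
    have h2 : Real.log (2 * C) / c ≤ (⌈Real.log (2 * C) / c⌉₊ : ℝ) := Nat.le_ceil _
    have h3 : ((⌈Real.log (2 * C) / c⌉₊ : ℕ) : ℝ) < (n : ℝ) := by
      rw [hn']; push_cast; linarith
    have h4 : Real.log (2 * C) < c * n := by
      have : Real.log (2 * C) / c < (n : ℝ) := lt_of_le_of_lt h2 h3
      calc Real.log (2 * C) = (Real.log (2 * C) / c) * c := by field_simp
        _ < (n : ℝ) * c := by exact mul_lt_mul_of_pos_right this hc
        _ = c * n := by ring
    have h5 : Real.exp (-c * (n : ℝ)) < Real.exp (-Real.log (2 * C)) :=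
      Real.exp_lt_exp.2 (by linarith)
    have h6 : Real.exp (-Real.log (2 * C)) = (2 * C)⁻¹ := by
      rw [Real.exp_neg, Real.exp_log (by positivity)]
    rw [h6] at h5
    calc C * Real.exp (-c * (n : ℝ)) < C * (2 * C)⁻¹ :=
          mul_lt_mul_of_pos_left h5 hC
      _ = 1 / 2 := by field_simp
  set a : Fin n → A := fun _ => x with ha
  obtain ⟨ρ, hρmem, hkey⟩ := hKey n a
  set p : ℝ := (P (cylinder a)).toReal with hp
  have hρpos : 0 < ρ := lt_of_lt_of_le hρ₁ hρmem.1
  have hp0 : 0 ≤ p := ENNReal.toReal_nonneg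
  rcases eq_or_lt_of_le hp0 with hp0' | hppos
  · -- P cylinder = 0 :  event is empty, contradiction
    have hempty : {ω : ℤ → A | (hitTime a ω : ℝ) * p > 1} = ∅ := by
      ext ω
      simp only [Set.mem_setOf_eq, Set.mem_empty_iff_false, iff_false, not_lt, gt_iff_lt]
      rw [← hp0', mul_zero]
      norm_num
    have h := hkey 1 one_pos
    rw [hempty] at h
    simp only [measure_empty, ENNReal.toReal_zero, zero_sub, abs_neg,
      abs_of_pos (Real.exp_pos _)] at h
    nlinarith [Real.exp_pos (-ρ * 1)]
  · -- main case : positive cylinder measure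
    have hαm : MeasurableSet (atomOf x) := measurableSet_atomOf x
    set D : Set (ℤ → A) :=
      {ω | ∃ k : ℕ, 1 ≤ k ∧ ∀ j : Fin n, ω ((j : ℤ) + (k : ℤ)) ∈ atomOf x} with hD
    have hDm : MeasurableSet D := by
      have hDeq : D = ⋃ (k : ℕ), ⋃ (_ : 1 ≤ k),
          ⋂ (j : Fin n), (fun ω : ℤ → A => ω ((j : ℤ) + (k : ℤ))) ⁻¹' atomOf x := by
        ext ω
        simp only [hD, Set.mem_setOf_eq, Set.mem_iUnion, Set.mem_iInter, Set.mem_preimage]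
        tauto
      rw [hDeq]
      exact MeasurableSet.iUnion fun k => MeasurableSet.iUnion fun _ =>
        MeasurableSet.iInter fun j => (measurable_pi_apply _) hαm
    -- the tail events
    have hSD : ∀ t : ℝ, 0 < t →
        {ω : ℤ → A | (hitTime a ω : ℝ) * p > t} ⊆ D := by
      intro t ht ω hω
      have hne : {k : ℕ | 1 ≤ k ∧ shift^[k] ω ∈ cylinder a}.Nonempty := by
        by_contra hne
        rw [Set.not_nonempty_iff_eq_empty] at hne
        have hz : hitTime a ω = 0 := by rw [hitTime, hne, Nat.sInf_empty]
        have := hω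
        simp only [Set.mem_setOf_eq, hz, Nat.cast_zero, zero_mul, gt_iff_lt] at this
        linarith
      obtain ⟨hk1, hkc⟩ := Nat.sInf_mem hne
      refine ⟨sInf {k : ℕ | 1 ≤ k ∧ shift^[k] ω ∈ cylinder a}, hk1, fun j => ?_⟩
      have hj := hkc j
      rw [shift_iterate] at hj
      rw [hj]
      exact mem_atomOf_self x
    -- positivity of P D
    have hlow := hkey (p / 2) (by positivity)
    have hlow1 : Real.exp (-ρ * (p / 2)) - C * Real.exp (-c * n) * Real.exp (-ρ * (p / 2))
        ≤ (P {ω : ℤ → A | (hitTime a ω : ℝ) * p > p / 2}).toReal := by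
      have := (abs_le.1 hlow).1
      linarith
    have hSpos : 0 < (P {ω : ℤ → A | (hitTime a ω : ℝ) * p > p / 2}).toReal := by
      nlinarith [Real.exp_pos (-ρ * (p / 2))]
    have hPDpos : 0 < P D := by
      have h1 : P {ω : ℤ → A | (hitTime a ω : ℝ) * p > p / 2} ≠ 0 := by
        intro hcon
        rw [hcon] at hSpos
        simp at hSpos
      calc (0 : ENNReal) < P {ω : ℤ → A | (hitTime a ω : ℝ) * p > p / 2} :=
            pos_iff_ne_zero.2 h1
        _ ≤ P D := measure_mono (hSD (p / 2) (by positivity))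
    set δ : ℝ := (P D).toReal with hδ
    have hδpos : 0 < δ := ENNReal.toReal_pos (ne_of_gt hPDpos) (measure_ne_top _ _)
    have hδ1 : δ ≤ 1 := by
      rw [hδ]
      have := prob_le_one (μ := P) (s := D)
      calc (P D).toReal ≤ (1 : ℝ≥0∞).toReal := ENNReal.toReal_mono ENNReal.one_ne_top this
        _ = 1 := by simp
    -- choose t large
    set t₀ : ℝ := (Real.log (2 / δ) + 1) / ρ₁ with ht₀'
    have hlog2 : 0 ≤ Real.log (2 / δ) := Real.log_nonneg (by
      rw [le_div_iff₀ hδpos]; linarith)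
    have ht₀ : 0 < t₀ := by
      rw [ht₀']
      positivity
    -- upper bound for the tail event at t₀
    have hup := hkey t₀ ht₀
    have hup1 : (P {ω : ℤ → A | (hitTime a ω : ℝ) * p > t₀}).toReal
        ≤ (3 / 2) * Real.exp (-ρ₁ * t₀) := by
      have h1 := (abs_le.1 hup).2
      have h2 : Real.exp (-ρ * t₀) ≤ Real.exp (-ρ₁ * t₀) :=
        Real.exp_le_exp.2 (by nlinarith [hρmem.1])
      nlinarith [Real.exp_pos (-ρ * t₀), Real.exp_pos (-ρ₁ * t₀)]
    have hval : (3 / 2) * Real.exp (-ρ₁ * t₀) < δ := by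
      have h1 : ρ₁ * t₀ = Real.log (2 / δ) + 1 := by
        rw [ht₀']; field_simp
      have h2 : Real.exp (-ρ₁ * t₀) = (δ / 2) * Real.exp (-1) := by
        rw [neg_mul, h1, neg_add, Real.exp_add, Real.exp_neg (Real.log (2 / δ)),
          Real.exp_log (by positivity)]
        field_simp
      rw [h2]
      have h3 : Real.exp (-1 : ℝ) < 1 := Real.exp_lt_one_iff.2 (by norm_num)
      nlinarith
    -- P D ≤ P (tail event at t₀)
    set T : Set (ℤ → A) := toMeasurable P {ω : ℤ → A | (hitTime a ω : ℝ) * p > t₀} with hT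
    have hTm : MeasurableSet T := measurableSet_toMeasurable _ _
    have hDsub : ∀ m : ℕ, shift^[m] ⁻¹' D ⊆ D := by
      intro m ω hω
      obtain ⟨k, hk1, hhit⟩ := hω
      refine ⟨k + m, le_add_right hk1, fun j => ?_⟩
      have hj := hhit j
      rw [shift_iterate] at hj
      have hidx : ((j : ℤ) + ((k + m : ℕ) : ℤ)) = ((j : ℤ) + (k : ℤ) + (m : ℤ)) := by
        push_cast; ring
      rw [hidx]
      exact hj
    have hpre : ∀ m : ℕ, P (shift^[m] ⁻¹' D) = P D := fun m =>
      (hinv.iterate m).measure_preimage hDm.nullMeasurableSet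
    have hDio : P D ≤ P T := by
      set Dio : Set (ℤ → A) := ⋂ m : ℕ, shift^[m] ⁻¹' D with hDio'
      have hsub2 : Dio ⊆ T := by
        intro ω hω
        obtain ⟨mm, hmm⟩ := exists_nat_gt (t₀ / p)
        have hωm : ω ∈ shift^[mm] ⁻¹' D := Set.mem_iInter.1 hω mm
        obtain ⟨k, hk1, hhit⟩ := hωm
        have hhit' : ∀ j : Fin n, ω ((j : ℤ) + ((k + mm : ℕ) : ℤ)) ∈ atomOf x := by
          intro j
          have hj := hhit j
          rw [shift_iterate] at hj
          have hidx : ((j : ℤ) + ((k + mm : ℕ) : ℤ)) = ((j : ℤ) + (k : ℤ) + (mm : ℤ)) := by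
            push_cast; ring
          rw [hidx]
          exact hj
        obtain ⟨ω', hω't, hω'mem⟩ :=
          exists_delay hn hy hyx ω (k + mm) (le_add_right hk1) hhit'
        have hω'S : ω' ∈ {ω : ℤ → A | (hitTime a ω : ℝ) * p > t₀} := by
          show (hitTime a ω' : ℝ) * p > t₀
          have hsame : hitTime a ω' = k + mm := hω't
          rw [hsame]
          have hkm : t₀ / p < ((k + mm : ℕ) : ℝ) := by
            have : (mm : ℝ) ≤ ((k + mm : ℕ) : ℝ) := by push_cast; linarith [Nat.one_le_iff_ne_zero.1 hk1, (by exact_mod_cast hk1 : (1:ℝ) ≤ (k:ℝ))]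
            linarith
          have := (div_lt_iff₀ hppos).1 hkm
          linarith [this]
        have : ω' ∈ T := subset_toMeasurable _ _ hω'S
        exact (hω'mem T hTm).1 this
      have hDdiff : P (D \ Dio) = 0 := by
        have hdeq : D \ Dio = ⋃ m : ℕ, (D \ shift^[m] ⁻¹' D) := by
          rw [hDio', Set.diff_iInter]
        rw [hdeq]
        refine measure_iUnion_null fun m => ?_
        have hmeq := measure_diff (hDsub m)
          (hDm.preimage (hinv.iterate m).measurable).nullMeasurableSet (measure_ne_top P _)
        rw [hmeq, hpre m, tsub_self]
      calc P D ≤ P (Dio ∪ (D \ Dio)) := measure_mono (fun ω hω => by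
            by_cases h : ω ∈ Dio
            exacts [Or.inl h, Or.inr ⟨hω, h⟩])
        _ ≤ P Dio + P (D \ Dio) := measure_union_le _ _
        _ = P Dio := by rw [hDdiff, add_zero]
        _ ≤ P T := measure_mono hsub2
    have hPT : P T = P {ω : ℤ → A | (hitTime a ω : ℝ) * p > t₀} :=
      measure_toMeasurable _
    have hfinal : δ ≤ (P {ω : ℤ → A | (hitTime a ω : ℝ) * p > t₀}).toReal := by
      rw [hδ, ← hPT]
      exact ENNReal.toReal_mono (measure_ne_top _ _) hDio
    linarith

end WTLaux

/-- under the exponential approximation of rescaled hitting-time laws,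
for every `α₁` with `α₁ ρ₁ > 1`, eventually `P×P`-almost surely
`log (W⁺ₙ(ω,ω')·P([ω₁ⁿ])) ≤ log log n^{α₁}`. -/
theorem waiting_time_log_upper_bound
    {A : Type*} [Fintype A] [MeasurableSpace A]
    (P : Measure (ℤ → A)) [IsProbabilityMeasure P]
    (hinv : MeasurePreserving shift P P)
    (C c ρ₁ ρ₂ : ℝ) (hC : 0 < C) (hc : 0 < c) (hρ₁ : 0 < ρ₁) (hρ₂ : 0 < ρ₂)
    (hρ : ρ₁ ≤ ρ₂)
    (hKey : ∀ (n : ℕ) (a : Fin n → A), ∃ ρ ∈ Set.Icc ρ₁ ρ₂, ∀ t : ℝ, 0 < t →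
      |(P {ω | (hitTime a ω : ℝ) * (P (cylinder a)).toReal > t}).toReal -
          Real.exp (-ρ * t)| ≤ C * Real.exp (-c * n) * Real.exp (-ρ * t))
    (α₁ : ℝ) (hα₁ : 1 < α₁ * ρ₁) :
    ∀ᵐ p ∂(P.prod P), ∀ᶠ n : ℕ in atTop,
      Real.log ((waitTime n p.1 p.2 : ℝ) * (P (cylinder (blockOf n p.1))).toReal) ≤
        Real.log (Real.log ((n : ℝ) ^ α₁)) := by
  classical
  by_cases hsep : ∀ z w : A, w ∈ WTLaux.atomOf z → w = z
  case neg =>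
    push_neg at hsep
    obtain ⟨z, w, hwz, hne⟩ := hsep
    exact (WTLaux.pathology P hinv C c ρ₁ ρ₂ hC hc hρ₁ hKey hwz hne).elim
  case pos =>
  have hα₁pos : 0 < α₁ := by nlinarith
  have hsing : ∀ z : A, MeasurableSet ({z} : Set A) := by
    intro z
    have h1 : ({z} : Set A) = WTLaux.atomOf z := by
      apply Set.Subset.antisymm
      · intro w hw
        rcases hw with rfl
        exact WTLaux.mem_atomOf_self w
      · intro w hw
        exact hsep z w hw
    rw [h1]
    exact WTLaux.measurableSet_atomOf z
  have hcylm : ∀ (n : ℕ) (a : Fin n → A), MeasurableSet (cylinder a) := by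
    intro n a
    have h1 : cylinder a = ⋂ i : Fin n, (fun ω : ℤ → A => ω ((i : ℤ))) ⁻¹' {a i} := by
      ext ω
      simp only [Set.mem_iInter, Set.mem_preimage, Set.mem_singleton_iff]
      exact Iff.rfl
    rw [h1]
    exact MeasurableSet.iInter fun i => (measurable_pi_apply _) (hsing _)
  set B : ℕ → Set ((ℤ → A) × (ℤ → A)) := fun n =>
    {q | (waitTime n q.1 q.2 : ℝ) * (P (cylinder (blockOf n q.1))).toReal
      > α₁ * Real.log n} with hB
  have hcount : ∀ n : ℕ, (∑' a : Fin n → A, P (cylinder a)) = 1 := by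
    intro n
    have hdisj : Pairwise (Function.onFun Disjoint fun a : Fin n → A => cylinder a) := by
      intro a b hab
      rw [Function.onFun, Set.disjoint_left]
      intro ω hωa hωb
      apply hab
      funext i
      rw [← hωa i, ← hωb i]
    have hunion : (⋃ a : Fin n → A, cylinder a) = Set.univ := by
      ext ω
      simp only [Set.mem_iUnion, Set.mem_univ, iff_true]
      exact ⟨blockOf n ω, fun i => rfl⟩
    rw [← measure_iUnion hdisj (fun a => hcylm n a), hunion, measure_univ]
  have hmain : ∀ n : ℕ, 2 ≤ n →
      (P.prod P) (B n) ≤ ENNReal.ofReal ((1 + C) * (n : ℝ) ^ (-(α₁ * ρ₁))) := by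
    intro n hn2
    have hnR : (1 : ℝ) < (n : ℝ) := by exact_mod_cast hn2
    have htpos : 0 < α₁ * Real.log n := mul_pos hα₁pos (Real.log_pos hnR)
    have hYb : ∀ a : Fin n → A,
        P {ω' | (hitTime a ω' : ℝ) * (P (cylinder a)).toReal > α₁ * Real.log n}
          ≤ ENNReal.ofReal ((1 + C) * Real.exp (-ρ₁ * (α₁ * Real.log n))) := by
      intro a
      obtain ⟨ρ, hρmem, hkey⟩ := hKey n a
      have h := (abs_le.1 (hkey _ htpos)).2
      have hexp1 : Real.exp (-c * (n : ℝ)) ≤ 1 := by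
        rw [Real.exp_le_one_iff]
        have : (0 : ℝ) ≤ (n : ℝ) := by positivity
        nlinarith
      have hexp2 : Real.exp (-ρ * (α₁ * Real.log n)) ≤ Real.exp (-ρ₁ * (α₁ * Real.log n)) :=
        Real.exp_le_exp.2 (by nlinarith [hρmem.1])
      have h4 : C * Real.exp (-c * (n : ℝ)) * Real.exp (-ρ * (α₁ * Real.log n))
          ≤ C * Real.exp (-ρ₁ * (α₁ * Real.log n)) := by
        calc C * Real.exp (-c * (n : ℝ)) * Real.exp (-ρ * (α₁ * Real.log n))
            ≤ C * 1 * Real.exp (-ρ * (α₁ * Real.log n)) := by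
              gcongr
          _ = C * Real.exp (-ρ * (α₁ * Real.log n)) := by ring
          _ ≤ C * Real.exp (-ρ₁ * (α₁ * Real.log n)) := by gcongr
      have hX : (P {ω' | (hitTime a ω' : ℝ) * (P (cylinder a)).toReal > α₁ * Real.log n}).toReal
          ≤ (1 + C) * Real.exp (-ρ₁ * (α₁ * Real.log n)) := by
        nlinarith [Real.exp_pos (-ρ * (α₁ * Real.log n))]
      calc P {ω' | (hitTime a ω' : ℝ) * (P (cylinder a)).toReal > α₁ * Real.log n}
          = ENNReal.ofReal (P {ω' | (hitTime a ω' : ℝ) * (P (cylinder a)).toReal > α₁ * Real.log n}).toReal :=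
            (ENNReal.ofReal_toReal (measure_ne_top _ _)).symm
        _ ≤ ENNReal.ofReal ((1 + C) * Real.exp (-ρ₁ * (α₁ * Real.log n))) :=
            ENNReal.ofReal_le_ofReal hX
    have hcover : B n ⊆ ⋃ a : Fin n → A,
        (cylinder a) ×ˢ {ω' | (hitTime a ω' : ℝ) * (P (cylinder a)).toReal > α₁ * Real.log n} := by
      intro q hq
      refine Set.mem_iUnion.2 ⟨blockOf n q.1, ⟨fun i => rfl, ?_⟩⟩
      exact hq
    calc (P.prod P) (B n)
        ≤ ∑' a : Fin n → A, (P.prod P) ((cylinder a) ×ˢ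
            {ω' | (hitTime a ω' : ℝ) * (P (cylinder a)).toReal > α₁ * Real.log n}) :=
          (measure_mono hcover).trans (measure_iUnion_le _)
      _ = ∑' a : Fin n → A, P (cylinder a) *
            P {ω' | (hitTime a ω' : ℝ) * (P (cylinder a)).toReal > α₁ * Real.log n} := by
          simp only [Measure.prod_prod]
      _ ≤ ∑' a : Fin n → A, P (cylinder a) *
            ENNReal.ofReal ((1 + C) * Real.exp (-ρ₁ * (α₁ * Real.log n))) :=
          ENNReal.tsum_le_tsum fun a => mul_le_mul_right (hYb a) _
      _ = (∑' a : Fin n → A, P (cylinder a)) *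
            ENNReal.ofReal ((1 + C) * Real.exp (-ρ₁ * (α₁ * Real.log n))) :=
          ENNReal.tsum_mul_right
      _ = ENNReal.ofReal ((1 + C) * Real.exp (-ρ₁ * (α₁ * Real.log n))) := by
          rw [hcount n, one_mul]
      _ = ENNReal.ofReal ((1 + C) * (n : ℝ) ^ (-(α₁ * ρ₁))) := by
          congr 2
          rw [Real.rpow_def_of_pos (by positivity : (0 : ℝ) < (n : ℝ))]
          congr 1
          ring
  have hsum : (∑' n : ℕ, (P.prod P) (B n)) ≠ ⊤ := by
    have hle : ∀ n : ℕ, (P.prod P) (B n) ≤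
        (if n < 2 then (1 : ENNReal) else 0) + ENNReal.ofReal ((1 + C) * (n : ℝ) ^ (-(α₁ * ρ₁))) := by
      intro n
      by_cases h2 : n < 2
      · simp only [h2, if_true]
        calc (P.prod P) (B n) ≤ 1 := prob_le_one
          _ ≤ 1 + ENNReal.ofReal ((1 + C) * (n : ℝ) ^ (-(α₁ * ρ₁))) := le_self_add
      · simp only [h2, if_false, zero_add]
        exact hmain n (not_lt.1 h2)
    refine ne_top_of_le_ne_top ?_ (ENNReal.tsum_le_tsum hle)
    rw [ENNReal.tsum_add]
    refine ENNReal.add_ne_top.2 ⟨?_, ?_⟩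
    · have heq : (∑' n : ℕ, (if n < 2 then (1 : ENNReal) else 0))
          = ∑ n ∈ Finset.range 2, (if n < 2 then (1 : ENNReal) else 0) := by
        refine tsum_eq_sum fun n hn => ?_
        rw [Finset.mem_range, not_lt] at hn
        simp [Nat.not_lt.2 hn]
      rw [heq]
      simp
    · rw [← ENNReal.ofReal_tsum_of_nonneg (fun n => by positivity)
        (((Real.summable_nat_rpow).2 (by linarith)).mul_left (1 + C))]
      exact ENNReal.ofReal_ne_top
  have hae := MeasureTheory.ae_eventually_notMem (μ := P.prod P) hsum
  have hev1 : ∀ᶠ n : ℕ in atTop, 1 ≤ α₁ * Real.log n := by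
    have h1 : Tendsto (fun n : ℕ => α₁ * Real.log n) atTop atTop :=
      (Real.tendsto_log_atTop.comp tendsto_natCast_atTop_atTop).const_mul_atTop hα₁pos
    exact h1.eventually_ge_atTop 1
  have hev2 : ∀ᶠ n : ℕ in atTop, 1 ≤ n := eventually_ge_atTop 1
  filter_upwards [hae] with q hq
  filter_upwards [hq, hev1, hev2] with n h1 h2 h3
  have hWle : (waitTime n q.1 q.2 : ℝ) * (P (cylinder (blockOf n q.1))).toReal
      ≤ α₁ * Real.log n := not_lt.1 h1
  have hnpos : (0 : ℝ) < (n : ℝ) := by exact_mod_cast h3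
  rw [Real.log_rpow hnpos]
  rcases eq_or_lt_of_le (show (0 : ℝ) ≤ (waitTime n q.1 q.2 : ℝ) *
      (P (cylinder (blockOf n q.1))).toReal by positivity) with h0 | h0
  · rw [← h0, Real.log_zero]
    exact Real.log_nonneg h2
  · exact Real.log_le_log h0 hWle
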